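/- Let τ = 1/1000 and let p, w, k be positive integers with k ≥ τ·w·p. Let x¹,…,x^w ∈ {−1,1}^p and let W ⊆ {1,…,p} with |W| ≥ (1−τ)p be such that for each j ∈ W the j-th coordinate is the same across all the vectors x¹,…,x^w, with common value s_j ∈ {−1,1} (consensus columns). Let α₂ ∈ (0,1) and define L(θ) = Σ_{l=1}^w (1 − θᵀx^l)² + k‖θ‖₂² for θ ∈ ℝ^p. If θ ∈ ℝ^p satisfies L(θ) < 1.1·τ·α₂²·w, then |{ j ∈ W : sgn(θ_j) = s_j }| ≥ 3p/4. -/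

import Mathlib

open scoped RealInnerProductSpace Classical

set_option maxHeartbeats 1600000 in
/-- Sign-agreement lemma for the fingerprinting lower-bound construction
(Lemma `ERM_Dist_Free_LB_Helper` in the paper): if the un-normalized ridge objective
`L(θ) = Σ_{l=1}^w (1 − θᵀx^l)² + k‖θ‖₂²` is below `1.1·τ·α₂²·w`, then the sign of `θ`
agrees with the consensus sign on at least `3p/4` of the consensus columns. -/
theorem stmt_4 {p w k : ℕ} (hp : 0 < p) (hw : 0 < w) (hk : 0 < k)
    (τ : ℝ) (hτ : τ = 1 / 1000) (hkwp : τ * w * p ≤ (k : ℝ))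
    (x : Fin w → EuclideanSpace ℝ (Fin p))
    (hx : ∀ l j, x l j = 1 ∨ x l j = -1)
    (W : Finset (Fin p)) (hW : (1 - τ) * p ≤ (W.card : ℝ))
    (s : Fin p → ℝ)
    (hs : ∀ j ∈ W, (s j = 1 ∨ s j = -1) ∧ ∀ l, x l j = s j)
    (α₂ : ℝ) (hα₂ : α₂ ∈ Set.Ioo (0:ℝ) 1)
    (θ : EuclideanSpace ℝ (Fin p))
    (hL : (∑ l, (1 - ⟪θ, x l⟫) ^ 2) + (k : ℝ) * ‖θ‖ ^ 2 < 1.1 * τ * α₂ ^ 2 * w) :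
    3 * (p : ℝ) / 4 ≤ ((W.filter fun j => Real.sign (θ j) = s j).card : ℝ) := by
  obtain ⟨hα0, hα1⟩ := hα₂
  set n : ℝ := ‖θ‖ ^ 2 with hn
  have hn0 : 0 ≤ n := sq_nonneg _
  have hp' : (1:ℝ) ≤ p := by exact_mod_cast hp
  have hw' : (1:ℝ) ≤ w := by exact_mod_cast hw
  -- the quadratic part of the loss is nonnegative
  have hsum0 : (0:ℝ) ≤ ∑ l, (1 - ⟪θ, x l⟫) ^ 2 :=
    Finset.sum_nonneg fun l _ => sq_nonneg _
  -- bound on ‖θ‖² : n * p < 1.1 * α₂²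
  have hnp : n * p < 1.1 * α₂ ^ 2 := by
    have hkn : (k:ℝ) * n < 1.1 * τ * α₂ ^ 2 * w := by linarith
    have h1 : τ * w * p * n ≤ (k:ℝ) * n := mul_le_mul_of_nonneg_right hkwp hn0
    rw [hτ] at h1 hkn
    nlinarith
  have hnp' : n * p < 11/10 := by nlinarith
  -- there exists a sample with small loss
  have hex : ∃ l, (1 - ⟪θ, x l⟫) ^ 2 < 1.1 * τ * α₂ ^ 2 := by
    by_contra hcon
    push_neg at hcon
    have : (w:ℝ) * (1.1 * τ * α₂ ^ 2) ≤ ∑ l, (1 - ⟪θ, x l⟫) ^ 2 := by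
      calc (w:ℝ) * (1.1 * τ * α₂ ^ 2)
          = ∑ _l : Fin w, (1.1 * τ * α₂ ^ 2) := by
            rw [Finset.sum_const]; simp [mul_comm]
        _ ≤ ∑ l, (1 - ⟪θ, x l⟫) ^ 2 := Finset.sum_le_sum fun l _ => hcon l
    have hkn0 : (0:ℝ) ≤ (k:ℝ) * n := mul_nonneg (Nat.cast_nonneg k) hn0
    nlinarith
  obtain ⟨l, hl⟩ := hex
  have hl' : (1 - ⟪θ, x l⟫) ^ 2 < 11/10000 := by
    rw [hτ] at hl; nlinarith
  -- expand the inner product and norm as sums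
  have hinner : ⟪θ, x l⟫ = ∑ j, θ j * x l j := by
    simp [PiLp.inner_apply, RCLike.inner_apply, conj_trivial, mul_comm]
  have hnorm : n = ∑ j, (θ j) ^ 2 := by
    rw [hn, ← real_inner_self_eq_norm_sq]
    simp only [PiLp.inner_apply, RCLike.inner_apply, conj_trivial, sq]
  set A : ℝ := ∑ j ∈ W, θ j * s j with hA
  set B : ℝ := ∑ j ∈ Finset.univ \ W, θ j * x l j with hB
  have hsplit : ⟪θ, x l⟫ = B + A := by
    rw [hinner, ← Finset.sum_sdiff (Finset.subset_univ W)]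
    congr 1
    exact Finset.sum_congr rfl fun j hj => by rw [(hs j hj).2 l]
  -- card of the complement of W
  have hWle : W.card ≤ p := by simpa using W.card_le_univ
  have hWc : ((Finset.univ \ W).card : ℝ) ≤ τ * p := by
    rw [Finset.card_sdiff_of_subset (Finset.subset_univ W), Nat.cast_sub (by simpa using hWle)]
    simp only [Finset.card_univ, Fintype.card_fin]
    linarith
  have hWc0 : (0:ℝ) ≤ τ * p := by rw [hτ]; positivity
  -- Cauchy–Schwarz bound on B
  have hB2 : B ^ 2 < 11/10000 := by
    have hcs := Finset.sum_mul_sq_le_sq_mul_sq (Finset.univ \ W) (fun j => θ j) (fun j => x l j)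
    have h1 : ∑ j ∈ Finset.univ \ W, (x l j) ^ 2 = ((Finset.univ \ W).card : ℝ) := by
      rw [Finset.sum_congr rfl (fun j _ => ?_), Finset.sum_const, nsmul_eq_mul, mul_one]
      rcases hx l j with h | h <;> rw [h] <;> norm_num
    have h2 : ∑ j ∈ Finset.univ \ W, (θ j) ^ 2 ≤ n := by
      rw [hnorm]
      exact Finset.sum_le_sum_of_subset_of_nonneg (Finset.sdiff_subset)
        fun j _ _ => sq_nonneg _
    have h3 : B ^ 2 ≤ n * (τ * p) := by
      calc B ^ 2 ≤ (∑ j ∈ Finset.univ \ W, (θ j) ^ 2) * ((Finset.univ \ W).card : ℝ) := by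
              rw [← h1]; exact hcs
        _ ≤ n * (τ * p) := by
              apply mul_le_mul h2 hWc (Nat.cast_nonneg _) hn0
    have he : n * (τ * p) = (n * ↑p) * τ := by ring
    have : n * (τ * p) < 11/10000 := by rw [he, hτ]; nlinarith
    linarith
  -- lower bound on A
  rw [hsplit] at hl'
  have hAlb : (9336:ℝ)/10000 < A := by
    have h1 : 1 - (B + A) < 332/10000 := by nlinarith [hl']
    have h2 : B < 332/10000 := by nlinarith
    have h3 : -B < 332/10000 := by nlinarith
    linarith
  set G : Finset (Fin p) := W.filter fun j => Real.sign (θ j) = s j with hG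
  set C : ℝ := ∑ j ∈ G, θ j * s j with hC
  -- A ≤ C : terms outside G are nonpositive
  have hAC : A ≤ C := by
    rw [hA, hC, hG, ← Finset.sum_filter_add_sum_filter_not W (fun j => Real.sign (θ j) = s j)]
    have : ∑ j ∈ W.filter (fun j => ¬ Real.sign (θ j) = s j), θ j * s j ≤ 0 := by
      apply Finset.sum_nonpos
      intro j hj
      rw [Finset.mem_filter] at hj
      obtain ⟨hjW, hjs⟩ := hj
      rcases (hs j hjW).1 with h | h
      · rw [h, mul_one]
        by_contra hpos
        push_neg at hpos
        exact hjs (by rw [Real.sign_of_pos hpos, h])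
      · rw [h, mul_neg_one, neg_nonpos]
        by_contra hneg
        push_neg at hneg
        exact hjs (by rw [Real.sign_of_neg (by linarith), h])
    linarith
  -- Cauchy–Schwarz on C
  have hC2 : C ^ 2 ≤ n * (G.card : ℝ) := by
    have hcs := Finset.sum_mul_sq_le_sq_mul_sq G (fun j => θ j) (fun j => s j)
    have h1 : ∑ j ∈ G, (s j) ^ 2 = (G.card : ℝ) := by
      rw [Finset.sum_congr rfl (fun j hj => ?_), Finset.sum_const, nsmul_eq_mul, mul_one]
      rcases (hs j (Finset.mem_filter.mp hj).1).1 with h | h <;> rw [h] <;> norm_num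
    have h2 : ∑ j ∈ G, (θ j) ^ 2 ≤ n := by
      rw [hnorm]
      exact Finset.sum_le_sum_of_subset_of_nonneg (Finset.subset_univ G)
        fun j _ _ => sq_nonneg _
    calc C ^ 2 ≤ (∑ j ∈ G, (θ j) ^ 2) * (G.card : ℝ) := by rw [← h1]; exact hcs
      _ ≤ n * (G.card : ℝ) := mul_le_mul_of_nonneg_right h2 (Nat.cast_nonneg _)
  -- final numeric computation
  have hGnn : (0:ℝ) ≤ (G.card : ℝ) := Nat.cast_nonneg _
  have hC0 : (9336:ℝ)/10000 < C := lt_of_lt_of_le hAlb hAC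
  have hnG : (9336/10000:ℝ)^2 < n * (G.card : ℝ) := by nlinarith
  have hGpos : (0:ℝ) < (G.card : ℝ) := by nlinarith
  have hfin : (9336/10000:ℝ)^2 * p < (11/10) * (G.card : ℝ) := by
    have h1 : (9336/10000:ℝ)^2 * p < n * (G.card : ℝ) * p :=
      mul_lt_mul_of_pos_right hnG (by linarith)
    have h2 : n * (G.card : ℝ) * p < (11/10) * (G.card : ℝ) := by
      calc n * (G.card : ℝ) * p = (n * p) * (G.card : ℝ) := by ring
        _ < (11/10) * (G.card : ℝ) := mul_lt_mul_of_pos_right hnp' hGpos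
    linarith
  rw [hG] at *
  linarith
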